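/- For every positive integer n, there exists a 3-coloring of the edges of the transitive tournament on {1,...,n³} such that every directed path that avoids at least one color has at most n² vertices; hence f(n³) ≤ n². -/

import Mathlib

/-- Every 3-coloring of the transitive tournament on `N` vertices contains a
directed path with at least `m` vertices avoiding at least one color. -/
def AvoidPathBound (N m : ℕ) : Prop :=
  ∀ col : Fin N → Fin N → Fin 3, ∃ k : ℕ, m ≤ k ∧
    ∃ s : Fin k → Fin N, StrictMono s ∧
      ∃ c : Fin 3, ∀ (i : ℕ) (h : i + 1 < k),
        col (s ⟨i, by omega⟩) (s ⟨i + 1, h⟩) ≠ c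

/-- `fRamsey N` is the largest `m` such that every 3-coloring of the transitive
tournament on `N` vertices contains a 1-color-avoiding path with at least `m`
vertices. -/
noncomputable def fRamsey (N : ℕ) : ℕ := sSup {m | AvoidPathBound N m}

/-- `L` is a valid sequence of `N` triples from `{1,…,n}³`: every later triple
strictly exceeds every earlier one in at least two coordinates. -/
def ValidSeq (n N : ℕ) (L : Fin N → Fin 3 → ℕ) : Prop :=
  (∀ k c, 1 ≤ L k c ∧ L k c ≤ n) ∧
  ∀ i j : Fin N, i < j → ∃ c₁ c₂ : Fin 3, c₁ ≠ c₂ ∧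
    L i c₁ < L j c₁ ∧ L i c₂ < L j c₂

/-- `Fseq n` is the maximum length of a valid sequence of triples from `{1,…,n}³`. -/
noncomputable def Fseq (n : ℕ) : ℕ := sSup {N | ∃ L : Fin N → Fin 3 → ℕ, ValidSeq n N L}

/-- The coloring: leftmost base-`n` digit in which two vertices differ. -/
def myCol (n : ℕ) : Fin (n ^ 3) → Fin (n ^ 3) → Fin 3 := fun u v =>
  if (u : ℕ) / n ^ 2 ≠ (v : ℕ) / n ^ 2 then 0
  else if ((u : ℕ) / n) % n ≠ ((v : ℕ) / n) % n then 1 else 2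

lemma mono_bound {k m : ℕ} (t : Fin k → ℕ) (hlt : ∀ i, t i < m)
    (hstep : ∀ (i : ℕ) (h : i + 1 < k), t ⟨i, Nat.lt_of_succ_lt h⟩ < t ⟨i + 1, h⟩) : k ≤ m := by
  by_contra hkm
  push_neg at hkm
  have key : ∀ (i : ℕ) (h : i < k), i ≤ t ⟨i, h⟩ := by
    intro i
    induction i with
    | zero => intro h; omega
    | succ j ih =>
      intro h
      have h1 : j < k := by omega
      have := hstep j h
      have := ih h1
      omega
  have h1 : m < k := hkm
  have := key m h1
  have := hlt ⟨m, h1⟩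
  omega

lemma myCol_bound (n : ℕ) (hn : 0 < n) (k : ℕ) (s : Fin k → Fin (n ^ 3))
    (hs : StrictMono s)
    (hc : ∃ c : Fin 3, ∀ (i : ℕ) (h : i + 1 < k),
      myCol n (s ⟨i, Nat.lt_of_succ_lt h⟩) (s ⟨i + 1, h⟩) ≠ c) : k ≤ n ^ 2 := by
  obtain ⟨c, hc⟩ := hc
  have hn2 : 0 < n ^ 2 := by positivity
  have key : ∃ g : ℕ → ℕ, (∀ u, u < n ^ 3 → g u < n ^ 2) ∧
      ∀ u v : Fin (n ^ 3), (u : ℕ) < v → myCol n u v ≠ c → g u < g v := by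
    have hdivlt : ∀ u : ℕ, u < n ^ 3 → u / n ^ 2 < n := by
      intro u hu
      rw [Nat.div_lt_iff_lt_mul hn2]
      calc u < n ^ 3 := hu
        _ = n * n ^ 2 := by ring
    have hdd : ∀ u : ℕ, u / n / n = u / n ^ 2 := by
      intro u; rw [Nat.div_div_eq_div_mul]; congr 1; ring
    fin_cases c
    · -- avoid color 0 : use u % n², first digit is constant along the path
      refine ⟨fun u => u % n ^ 2, fun u _ => Nat.mod_lt _ hn2, ?_⟩
      intro u v huv hcol
      have heq : (u : ℕ) / n ^ 2 = (v : ℕ) / n ^ 2 := by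
        by_contra h
        simp [myCol, h] at hcol
      show (u : ℕ) % n ^ 2 < (v : ℕ) % n ^ 2
      have h1 := Nat.div_add_mod (u : ℕ) (n ^ 2)
      have h2 := Nat.div_add_mod (v : ℕ) (n ^ 2)
      rw [heq] at h1
      omega
    · -- avoid color 1 : use (u / n²) * n + u % n
      refine ⟨fun u => u / n ^ 2 * n + u % n, ?_, ?_⟩
      · intro u hu
        have h1 := hdivlt u hu
        have h2 : u % n < n := Nat.mod_lt _ hn
        have : u / n ^ 2 * n + u % n < n * n := by nlinarith
        calc u / n ^ 2 * n + u % n < n * n := this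
          _ = n ^ 2 := by ring
      · intro u v huv hcol
        show (u : ℕ) / n ^ 2 * n + (u : ℕ) % n <
          (v : ℕ) / n ^ 2 * n + (v : ℕ) % n
        by_cases hd : (u : ℕ) / n ^ 2 = (v : ℕ) / n ^ 2
        · -- first digits equal; color must be 2, so second digits equal too
          have heq2 : ((u : ℕ) / n) % n = ((v : ℕ) / n) % n := by
            by_contra h
            simp [myCol, hd, h] at hcol
          have hq : (u : ℕ) / n = (v : ℕ) / n := by
            have e1 := Nat.div_add_mod ((u : ℕ) / n) n
            have e2 := Nat.div_add_mod ((v : ℕ) / n) n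
            rw [hdd, hd, ← hdd] at e1
            omega
          have h1 := Nat.div_add_mod (u : ℕ) n
          have h2 := Nat.div_add_mod (v : ℕ) n
          rw [hq] at h1
          rw [hd]
          omega
        · -- first digit strictly increases
          have hle : (u : ℕ) / n ^ 2 ≤ (v : ℕ) / n ^ 2 :=
            Nat.div_le_div_right huv.le
          have hlt : (u : ℕ) / n ^ 2 < (v : ℕ) / n ^ 2 := lt_of_le_of_ne hle hd
          have h1 : (u : ℕ) % n < n := Nat.mod_lt _ hn
          have h2 : ((u : ℕ) / n ^ 2 + 1) * n ≤ (v : ℕ) / n ^ 2 * n :=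
            Nat.mul_le_mul_right n hlt
          have h3 : (u : ℕ) / n ^ 2 * n + n = ((u : ℕ) / n ^ 2 + 1) * n := by
            ring
          omega
    · -- avoid color 2 : use u / n
      refine ⟨fun u => u / n, ?_, ?_⟩
      · intro u hu
        rw [Nat.div_lt_iff_lt_mul hn]
        calc u < n ^ 3 := hu
          _ = n ^ 2 * n := by ring
      · intro u v huv hcol
        show (u : ℕ) / n < (v : ℕ) / n
        have hle : (u : ℕ) / n ≤ (v : ℕ) / n := Nat.div_le_div_right huv.le
        rcases eq_or_lt_of_le hle with hq | hq
        · exfalso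
          have hd : (u : ℕ) / n ^ 2 = (v : ℕ) / n ^ 2 := by
            rw [← hdd, ← hdd, hq]
          have hm : ((u : ℕ) / n) % n = ((v : ℕ) / n) % n := by rw [hq]
          simp [myCol, hd, hm] at hcol
        · exact hq
  obtain ⟨g, hglt, hgstep⟩ := key
  refine mono_bound (fun i => g (s i)) (fun i => hglt _ (s i).2) ?_
  intro i h
  have hlt : s ⟨i, Nat.lt_of_succ_lt h⟩ < s ⟨i + 1, h⟩ := hs (by simp [Fin.lt_def])
  exact hgstep _ _ hlt (hc i h)

/-- There is a 3-coloring of the transitive tournament on `n³` vertices in which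
every 1-color-avoiding directed path has at most `n²` vertices; hence
`f(n³) ≤ n²`. -/
theorem fRamsey_upper (n : ℕ) (hn : 0 < n) :
    (∃ col : Fin (n ^ 3) → Fin (n ^ 3) → Fin 3,
      ∀ (k : ℕ) (s : Fin k → Fin (n ^ 3)), StrictMono s →
        (∃ c : Fin 3, ∀ (i : ℕ) (h : i + 1 < k),
          col (s ⟨i, by omega⟩) (s ⟨i + 1, h⟩) ≠ c) → k ≤ n ^ 2) ∧
    fRamsey (n ^ 3) ≤ n ^ 2 := by
  constructor
  · exact ⟨myCol n, fun k s hs hc => myCol_bound n hn k s hs hc⟩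
  · apply csSup_le
    · exact ⟨0, fun col => ⟨0, le_refl 0, Fin.elim0, fun i => i.elim0,
        0, fun i h => by omega⟩⟩
    · intro m hm
      obtain ⟨k, hmk, s, hs, c, hcol⟩ := hm (myCol n)
      exact hmk.trans (myCol_bound n hn k s hs ⟨c, hcol⟩)
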